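/- arXiv:2208.10443 — 2 statements merged into one kernel-verified Lean document; each statement's English description precedes it below -/
import Mathlib

section
/- Let N ≥ 1 and let A be an N×N complex matrix with singular value decomposition A = U Σ V*, where U and V are unitary N×N matrices with columns u₁,…,u_N and v₁,…,v_N respectively, and Σ = diag(σ₁,…,σ_N) with σ₁ ≥ σ₂ ≥ … ≥ σ_N ≥ 0. Let ε > 0, let b ∈ ℂ^N, and let x ∈ ℂ^N satisfy A x = b. Let 1 ≤ n ≤ N, and suppose real perturbations δσ₁,…,δσ_n satisfy |δσᵢ| ≤ ε σ₁ and σᵢ + δσᵢ > 3 ε σ₁ for each i = 1,…,n, and δb ∈ ℂⁿ satisfies ‖δb‖₂ ≤ ε(1+ε)‖b‖₂. Define the computed truncated-SVD solution x̂ = Σ_{i=1}^{n} ((uᵢ* b + δbᵢ)/(σᵢ + δσᵢ)) vᵢ. Then ‖x̂‖₂ ≤ (7/3)(1+ε)‖x‖₂. -/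
open Matrix in
private lemma tsvd_sum_castLE {M : Type*} [AddCommMonoid M] {n N : ℕ} (h : n ≤ N) (g : Fin N → M)
    (hg : ∀ k : Fin N, n ≤ (k : ℕ) → g k = 0) :
    ∑ k, g k = ∑ i : Fin n, g (Fin.castLE h i) := by
  have e1 : ∑ i : Fin n, g (Fin.castLE h i)
      = ∑ k ∈ Finset.univ.map (Fin.castLEEmb h), g k := by
    rw [Finset.sum_map]; simp [Fin.coe_castLEEmb]
  rw [e1]
  refine (Finset.sum_subset (Finset.subset_univ _) ?_).symm
  intro k _ hk
  refine hg k ?_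
  by_contra hlt
  push_neg at hlt
  exact hk (Finset.mem_map.mpr ⟨⟨k, hlt⟩, Finset.mem_univ _, rfl⟩)

private lemma tsvd_sum_castLE_le {n N : ℕ} (h : n ≤ N) (g : Fin N → ℝ) (hg : ∀ k, 0 ≤ g k) :
    ∑ i : Fin n, g (Fin.castLE h i) ≤ ∑ k, g k := by
  have e1 : ∑ i : Fin n, g (Fin.castLE h i)
      = ∑ k ∈ Finset.univ.map (Fin.castLEEmb h), g k := by
    rw [Finset.sum_map]; simp [Fin.coe_castLEEmb]
  rw [e1]
  exact Finset.sum_le_sum_of_subset_of_nonneg (Finset.subset_univ _) (fun k _ _ => hg k)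

open Matrix in
private lemma tsvd_star_dot (N : ℕ) (v : Fin N → ℂ) :
    star v ⬝ᵥ v = ((∑ j, ‖v j‖ ^ 2 : ℝ) : ℂ) := by
  simp only [dotProduct, Pi.star_apply, Complex.star_def]
  push_cast
  refine Finset.sum_congr rfl fun j _ => ?_
  rw [Complex.conj_mul']

open Matrix in
private lemma tsvd_unitary_sq {N : ℕ} (M : Matrix (Fin N) (Fin N) ℂ) (h : Mᴴ * M = 1)
    (z : Fin N → ℂ) : ∑ j, ‖(M *ᵥ z) j‖ ^ 2 = ∑ j, ‖z j‖ ^ 2 := by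
  have key : star (M *ᵥ z) ⬝ᵥ (M *ᵥ z) = star z ⬝ᵥ z := by
    rw [Matrix.star_mulVec, Matrix.dotProduct_mulVec, Matrix.vecMul_vecMul, h, Matrix.vecMul_one]
  rw [tsvd_star_dot, tsvd_star_dot] at key
  exact_mod_cast key


set_option maxHeartbeats 1000000
open Matrix


/-- **Norm bound for the truncated-SVD solution.**
Let `A = U Σ V*` be an SVD of the `N × N` complex matrix `A`, with `U, V` unitary and
`Σ = diag (σ₁ ≥ σ₂ ≥ ⋯ ≥ σ_N ≥ 0)`.  Suppose `A x = b`, and let `1 ≤ n ≤ N`.  Suppose the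
perturbations `δσᵢ` of the retained singular values satisfy `|δσᵢ| ≤ ε σ₁` and
`σᵢ + δσᵢ > 3 ε σ₁` for `i = 1, …, n`, and that `δb ∈ ℂⁿ` satisfies
`‖δb‖₂ ≤ ε (1+ε) ‖b‖₂`.  Then the computed truncated-SVD solution
`xhat = ∑_{i=1}^{n} ((uᵢ* b + δbᵢ)/(σᵢ + δσᵢ)) vᵢ` satisfies
`‖xhat‖₂ ≤ (7/3) (1+ε) ‖x‖₂`. -/
theorem truncated_svd_solution_norm_bound
    (N n : ℕ) (hN : 0 < N) (hn : 1 ≤ n) (hnN : n ≤ N)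
    (A U V : Matrix (Fin N) (Fin N) ℂ)
    (hU : U ∈ Matrix.unitaryGroup (Fin N) ℂ)
    (hV : V ∈ Matrix.unitaryGroup (Fin N) ℂ)
    (σ : Fin N → ℝ)
    (hσ_anti : ∀ i j : Fin N, i ≤ j → σ j ≤ σ i)
    (hσ_nonneg : ∀ i : Fin N, 0 ≤ σ i)
    (hSVD : A = U * Matrix.diagonal (fun i => (σ i : ℂ)) * V.conjTranspose)
    (ε : ℝ) (hε : 0 < ε)
    (b x : EuclideanSpace ℂ (Fin N))
    (hx : Matrix.toEuclideanCLM (𝕜 := ℂ) A x = b)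
    (δσ : Fin n → ℝ)
    (hδσ_small : ∀ i : Fin n, |δσ i| ≤ ε * σ ⟨0, hN⟩)
    (hδσ_big : ∀ i : Fin n, σ (Fin.castLE hnN i) + δσ i > 3 * ε * σ ⟨0, hN⟩)
    (δb : EuclideanSpace ℂ (Fin n))
    (hδb : ‖δb‖ ≤ ε * (1 + ε) * ‖b‖)
    (xhat : EuclideanSpace ℂ (Fin N))
    (hxhat : xhat = ∑ i : Fin n,
      ((((∑ j : Fin N, (starRingEnd ℂ) (U j (Fin.castLE hnN i)) * b j) + δb i)
          / ((σ (Fin.castLE hnN i) + δσ i : ℝ) : ℂ)) •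
        (show EuclideanSpace ℂ (Fin N) from WithLp.toLp 2 (fun j => V j (Fin.castLE hnN i))))) :
    ‖xhat‖ ≤ 7 / 3 * (1 + ε) * ‖x‖ := by
  classical
  set σ1 := σ ⟨0, hN⟩ with hσ1def
  have hσle : ∀ i : Fin N, σ i ≤ σ1 := fun i => hσ_anti ⟨0, hN⟩ i (Nat.zero_le _)
  -- σ1 > 0
  have hσ1pos : 0 < σ1 := by
    rcases lt_or_ge 0 σ1 with h | h
    · exact h
    · exfalso
      have h0 : σ1 = 0 := le_antisymm h (hσ_nonneg _)
      have h1 := hδσ_big ⟨0, hn⟩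
      have h2 := hδσ_small ⟨0, hn⟩
      have h3 : σ (Fin.castLE hnN ⟨0, hn⟩) ≤ 0 := h0 ▸ hσle _
      have h4 := le_abs_self (δσ ⟨0, hn⟩)
      rw [h0] at h1 h2
      nlinarith
  have hεσ : 0 < 3 * ε * σ1 := by positivity
  set d : Fin n → ℝ := fun i => σ (Fin.castLE hnN i) + δσ i with hddef
  have hd3 : ∀ i, 3 * ε * σ1 < d i := hδσ_big
  have hdpos : ∀ i, 0 < d i := fun i => lt_trans hεσ (hd3 i)
  have hσd : ∀ i, σ (Fin.castLE hnN i) ≤ 4 / 3 * d i := by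
    intro i
    have h1 := hδσ_small i
    have h2 := hd3 i
    have h3 := neg_abs_le (δσ i)
    have h4 : d i = σ (Fin.castLE hnN i) + δσ i := rfl
    nlinarith
  -- unitarity
  have hU1 : Uᴴ * U = 1 := by
    have := hU.1; rwa [Matrix.star_eq_conjTranspose] at this
  have hU2 : U * Uᴴ = 1 := by
    have := hU.2; rwa [Matrix.star_eq_conjTranspose] at this
  have hV1 : Vᴴ * V = 1 := by
    have := hV.1; rwa [Matrix.star_eq_conjTranspose] at this
  have hV2 : V * Vᴴ = 1 := by
    have := hV.2; rwa [Matrix.star_eq_conjTranspose] at this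
  -- b = A x entrywise
  have hb : (b : Fin N → ℂ) = A *ᵥ (x : Fin N → ℂ) := by
    funext j
    have := congrArg (fun v => WithLp.equiv 2 (Fin N → ℂ) v j) hx
    simpa [Matrix.ofLp_toEuclideanCLM] using this.symm
  set w : Fin N → ℂ := Vᴴ *ᵥ (x : Fin N → ℂ) with hwdef
  have hUb : (Uᴴ *ᵥ (b : Fin N → ℂ)) = fun i => (σ i : ℂ) * w i := by
    funext i
    rw [hb, hSVD, Matrix.mulVec_mulVec,
      show Uᴴ * (U * Matrix.diagonal (fun i => (σ i : ℂ)) * Vᴴ)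
          = Matrix.diagonal (fun i => (σ i : ℂ)) * Vᴴ by
        rw [← Matrix.mul_assoc, ← Matrix.mul_assoc, hU1, Matrix.one_mul],
      ← Matrix.mulVec_mulVec, Matrix.mulVec_diagonal]
  -- norms as sums
  have hxnorm : ∑ j, ‖(x : Fin N → ℂ) j‖ ^ 2 = ‖x‖ ^ 2 := by
    rw [EuclideanSpace.norm_eq, Real.sq_sqrt (by positivity)]
  have hbnorm : ∑ j, ‖(b : Fin N → ℂ) j‖ ^ 2 = ‖b‖ ^ 2 := by
    rw [EuclideanSpace.norm_eq, Real.sq_sqrt (by positivity)]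
  have hw2 : ∑ j, ‖w j‖ ^ 2 = ‖x‖ ^ 2 := by
    rw [hwdef, tsvd_unitary_sq Vᴴ (by rw [Matrix.conjTranspose_conjTranspose, hV2]) _, hxnorm]
  have hb2 : ‖b‖ ^ 2 = ∑ i, (σ i) ^ 2 * ‖w i‖ ^ 2 := by
    rw [← hbnorm, ← tsvd_unitary_sq Uᴴ (by rw [Matrix.conjTranspose_conjTranspose, hU2]) _, hUb]
    refine Finset.sum_congr rfl fun i _ => ?_
    rw [norm_mul, Complex.norm_real, Real.norm_of_nonneg (hσ_nonneg i), mul_pow]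
  have hble : ‖b‖ ≤ σ1 * ‖x‖ := by
    have h2 : ‖b‖ ^ 2 ≤ (σ1 * ‖x‖) ^ 2 := by
      rw [hb2, mul_pow, ← hw2, Finset.mul_sum]
      refine Finset.sum_le_sum fun i _ => ?_
      exact mul_le_mul_of_nonneg_right (pow_le_pow_left₀ (hσ_nonneg i) (hσle i) 2)
        (sq_nonneg _)
    calc ‖b‖ = Real.sqrt (‖b‖ ^ 2) := (Real.sqrt_sq (norm_nonneg b)).symm
      _ ≤ Real.sqrt ((σ1 * ‖x‖) ^ 2) := Real.sqrt_le_sqrt h2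
      _ = σ1 * ‖x‖ := Real.sqrt_sq (by positivity)
  -- coefficients
  set c : Fin n → ℂ := fun i =>
    (((σ (Fin.castLE hnN i) : ℂ) * w (Fin.castLE hnN i)) + δb i) / ((d i : ℝ) : ℂ) with hcdef
  have hcoeff : ∀ i : Fin n, (∑ j, (starRingEnd ℂ) (U j (Fin.castLE hnN i)) * b j)
      = (σ (Fin.castLE hnN i) : ℂ) * w (Fin.castLE hnN i) := by
    intro i
    have h7 := congrFun hUb (Fin.castLE hnN i)
    rw [← h7]
    simp [Matrix.mulVec, dotProduct, Matrix.conjTranspose_apply]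
  have hxhat' : xhat = ∑ i : Fin n, (c i •
      (show EuclideanSpace ℂ (Fin N) from WithLp.toLp 2 (fun j => V j (Fin.castLE hnN i)))) := by
    rw [hxhat]
    refine Finset.sum_congr rfl fun i _ => ?_
    rw [hcoeff i]
  have hxe : ∀ j, xhat j = ∑ i : Fin n, c i * V j (Fin.castLE hnN i) := by
    intro j
    have h2 := congrArg (⇑(WithLp.linearEquiv 2 ℂ (Fin N → ℂ))) hxhat'
    rw [map_sum] at h2
    have h3 := congrFun h2 j
    simpa [Finset.sum_apply] using h3
  set cext : Fin N → ℂ := fun k => if hk : (k : ℕ) < n then c ⟨k, hk⟩ else 0 with hcext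
  have hcext0 : ∀ k : Fin N, n ≤ (k : ℕ) → cext k = 0 := fun k hk => dif_neg (not_lt.mpr hk)
  have hcextc : ∀ i : Fin n, cext (Fin.castLE hnN i) = c i := by
    intro i
    simp [hcext, Fin.castLE]
  have hVc : ∀ j, (V *ᵥ cext) j = xhat j := by
    intro j
    have h8 := tsvd_sum_castLE hnN (fun k => V j k * cext k)
      (fun k hk => by show V j k * cext k = 0; rw [hcext0 k hk, mul_zero])
    calc (V *ᵥ cext) j = ∑ k, V j k * cext k := by
          simp [Matrix.mulVec, dotProduct]
      _ = ∑ i : Fin n, V j (Fin.castLE hnN i) * cext (Fin.castLE hnN i) := h8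
      _ = ∑ i : Fin n, c i * V j (Fin.castLE hnN i) := by
          refine Finset.sum_congr rfl fun i _ => ?_
          rw [hcextc]; ring
      _ = xhat j := (hxe j).symm
  have hxhat2 : ‖xhat‖ ^ 2 = ∑ i : Fin n, ‖c i‖ ^ 2 := by
    rw [EuclideanSpace.norm_eq, Real.sq_sqrt (by positivity),
      show ∑ j, ‖xhat j‖ ^ 2 = ∑ j, ‖(V *ᵥ cext) j‖ ^ 2 from
        Finset.sum_congr rfl fun j _ => by rw [hVc],
      tsvd_unitary_sq V hV1 cext,
      tsvd_sum_castLE hnN (fun k => ‖cext k‖ ^ 2)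
        (fun k hk => by show ‖cext k‖ ^ 2 = 0; rw [hcext0 k hk]; simp)]
    exact Finset.sum_congr rfl fun i _ => by rw [hcextc]
  -- split
  set C1 : EuclideanSpace ℂ (Fin n) :=
    WithLp.toLp 2 (fun i => ((σ (Fin.castLE hnN i) : ℂ) * w (Fin.castLE hnN i)) / ((d i : ℝ) : ℂ)) with hC1def
  set C2 : EuclideanSpace ℂ (Fin n) := WithLp.toLp 2 (fun i => δb i / ((d i : ℝ) : ℂ)) with hC2def
  have hsplit : ∀ i, c i = C1 i + C2 i := by
    intro i
    show c i = _ + _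
    rw [hcdef]
    exact add_div _ _ _
  have hnx : ‖xhat‖ = ‖C1 + C2‖ := by
    have h1 : ‖C1 + C2‖ ^ 2 = ∑ i : Fin n, ‖c i‖ ^ 2 := by
      rw [EuclideanSpace.norm_eq, Real.sq_sqrt (by positivity)]
      refine Finset.sum_congr rfl fun i _ => ?_
      rw [hsplit i]
      rfl
    calc ‖xhat‖ = Real.sqrt (‖xhat‖ ^ 2) := (Real.sqrt_sq (norm_nonneg _)).symm
      _ = Real.sqrt (‖C1 + C2‖ ^ 2) := by rw [hxhat2, h1]
      _ = ‖C1 + C2‖ := Real.sqrt_sq (norm_nonneg _)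
  -- bound C1
  have hC1n : ∀ i, ‖C1 i‖ = σ (Fin.castLE hnN i) * ‖w (Fin.castLE hnN i)‖ / d i := by
    intro i
    show ‖((σ (Fin.castLE hnN i) : ℂ) * w (Fin.castLE hnN i)) / ((d i : ℝ) : ℂ)‖ = _
    rw [norm_div, norm_mul, Complex.norm_real, Complex.norm_real,
      Real.norm_of_nonneg (hσ_nonneg _), Real.norm_of_nonneg (hdpos i).le]
  have hC1le : ‖C1‖ ≤ 4 / 3 * ‖x‖ := by
    have h1 : ‖C1‖ ^ 2 ≤ (4 / 3 * ‖x‖) ^ 2 := by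
      rw [EuclideanSpace.norm_eq, Real.sq_sqrt (by positivity)]
      have e1 : ∀ i : Fin n, ‖C1 i‖ ^ 2 ≤ (4 / 3) ^ 2 * ‖w (Fin.castLE hnN i)‖ ^ 2 := by
        intro i
        rw [hC1n i, div_pow, div_le_iff₀ (pow_pos (hdpos i) 2)]
        have h5 := hσd i
        have h6 := hσ_nonneg (Fin.castLE hnN i)
        have h7 := (hdpos i).le
        nlinarith [norm_nonneg (w (Fin.castLE hnN i)), sq_nonneg ‖w (Fin.castLE hnN i)‖,
          mul_le_mul h5 h5 h6 (by positivity : (0:ℝ) ≤ 4 / 3 * d i),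
          sq_nonneg (‖w (Fin.castLE hnN i)‖ * d i)]
      calc ∑ i : Fin n, ‖C1 i‖ ^ 2
          ≤ ∑ i : Fin n, (4 / 3) ^ 2 * ‖w (Fin.castLE hnN i)‖ ^ 2 :=
            Finset.sum_le_sum fun i _ => e1 i
        _ ≤ (4 / 3) ^ 2 * ∑ j, ‖w j‖ ^ 2 := by
            rw [← Finset.mul_sum]
            exact mul_le_mul_of_nonneg_left
              (tsvd_sum_castLE_le hnN (fun k => ‖w k‖ ^ 2) (fun k => by positivity))
              (by positivity)
        _ = (4 / 3 * ‖x‖) ^ 2 := by rw [hw2]; ring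
    calc ‖C1‖ = Real.sqrt (‖C1‖ ^ 2) := (Real.sqrt_sq (norm_nonneg _)).symm
      _ ≤ Real.sqrt ((4 / 3 * ‖x‖) ^ 2) := Real.sqrt_le_sqrt h1
      _ = 4 / 3 * ‖x‖ := Real.sqrt_sq (by positivity)
  -- bound C2
  have hδbnorm : ∑ i : Fin n, ‖δb i‖ ^ 2 = ‖δb‖ ^ 2 := by
    rw [EuclideanSpace.norm_eq, Real.sq_sqrt (by positivity)]
  have hC2le : ‖C2‖ ≤ (1 + ε) / 3 * ‖x‖ := by
    have h1 : ‖C2‖ ^ 2 ≤ (‖δb‖ / (3 * ε * σ1)) ^ 2 := by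
      rw [EuclideanSpace.norm_eq, Real.sq_sqrt (by positivity), div_pow, ← hδbnorm,
        Finset.sum_div]
      refine Finset.sum_le_sum fun i _ => ?_
      have e2 : ‖C2 i‖ = ‖δb i‖ / d i := by
        show ‖δb i / ((d i : ℝ) : ℂ)‖ = _
        rw [norm_div, Complex.norm_real, Real.norm_of_nonneg (hdpos i).le]
      rw [e2, div_pow, div_le_div_iff₀ (pow_pos (hdpos i) 2) (by positivity)]
      have h5 := (hd3 i).le
      nlinarith [sq_nonneg ‖δb i‖, mul_le_mul h5 h5 hεσ.le (hdpos i).le]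
    have h2 : ‖C2‖ ≤ ‖δb‖ / (3 * ε * σ1) := by
      calc ‖C2‖ = Real.sqrt (‖C2‖ ^ 2) := (Real.sqrt_sq (norm_nonneg _)).symm
        _ ≤ Real.sqrt ((‖δb‖ / (3 * ε * σ1)) ^ 2) := Real.sqrt_le_sqrt h1
        _ = ‖δb‖ / (3 * ε * σ1) := Real.sqrt_sq (by positivity)
    have h3 : ‖δb‖ / (3 * ε * σ1) ≤ (1 + ε) / 3 * ‖x‖ := by
      rw [div_le_iff₀ hεσ]
      nlinarith [mul_le_mul_of_nonneg_left hble
        (by positivity : (0:ℝ) ≤ ε * (1 + ε))]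
    exact h2.trans h3
  rw [hnx]
  calc ‖C1 + C2‖ ≤ ‖C1‖ + ‖C2‖ := norm_add_le _ _
    _ ≤ 4 / 3 * ‖x‖ + (1 + ε) / 3 * ‖x‖ := add_le_add hC1le hC2le
    _ ≤ 7 / 3 * (1 + ε) * ‖x‖ := by nlinarith [norm_nonneg x, hε.le]
end

section
/- Let N ≥ 0 and let P ∈ ℝ[X,Y] be a polynomial in two variables of total degree at most N. Then there exists a polynomial Q ∈ ℝ[X,Y] of total degree at most N + 2 such that ∂²Q/∂X² + ∂²Q/∂Y² = P, where the partial derivatives are formal partial derivatives of polynomials. -/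
open MvPolynomial Finsupp

lemma fin2_decomp (m : Fin 2 →₀ ℕ) :
    m = Finsupp.single 0 (m 0) + Finsupp.single 1 (m 1) := by
  ext i; fin_cases i <;> simp [Finsupp.single_apply]

lemma msum (a b : ℕ) :
    ((Finsupp.single (0 : Fin 2) a + Finsupp.single 1 b).sum fun _ e => e) = a + b := by
  classical
  rw [Finsupp.sum_add_index (by simp) (by simp), Finsupp.sum_single_index rfl,
    Finsupp.sum_single_index rfl]

lemma sub0 (a b k : ℕ) :
    (Finsupp.single (0 : Fin 2) a + Finsupp.single 1 b) - Finsupp.single 0 k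
      = Finsupp.single 0 (a - k) + Finsupp.single 1 b := by
  ext i; fin_cases i <;> simp [Finsupp.single_apply]

lemma sub1 (a b k : ℕ) :
    (Finsupp.single (0 : Fin 2) a + Finsupp.single 1 b) - Finsupp.single 1 k
      = Finsupp.single 0 a + Finsupp.single 1 (b - k) := by
  ext i; fin_cases i <;> simp [Finsupp.single_apply]

lemma app0 (a b : ℕ) : ((Finsupp.single (0 : Fin 2) a + Finsupp.single 1 b : Fin 2 →₀ ℕ)) 0 = a := by
  simp [Finsupp.single_apply]

lemma app1 (a b : ℕ) : ((Finsupp.single (0 : Fin 2) a + Finsupp.single 1 b : Fin 2 →₀ ℕ)) 1 = b := by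
  simp [Finsupp.single_apply]

lemma mono_antiLap : ∀ b a : ℕ, ∀ c : ℝ, ∃ Q : MvPolynomial (Fin 2) ℝ,
    Q.totalDegree ≤ a + b + 2 ∧
    pderiv (0 : Fin 2) (pderiv (0 : Fin 2) Q) + pderiv (1 : Fin 2) (pderiv (1 : Fin 2) Q)
      = monomial (Finsupp.single 0 a + Finsupp.single 1 b) c := by
  intro b
  induction b using Nat.strong_induction_on with
  | _ b ih =>
  intro a c
  set d : ℝ := ((a : ℝ) + 1) * ((a : ℝ) + 2) with hd_def
  have hd : d ≠ 0 := by positivity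
  set Q0 : MvPolynomial (Fin 2) ℝ :=
    monomial (Finsupp.single 0 (a + 2) + Finsupp.single 1 b) (c / d) with hQ0
  have hdeg0 : Q0.totalDegree ≤ a + b + 2 := by
    refine (totalDegree_monomial_le _ _).trans ?_
    rw [show (fun (_ : Fin 2) => @id ℕ) = (fun _ e => e) from rfl, msum]; omega
  have hlap0 : pderiv (0 : Fin 2) (pderiv (0 : Fin 2) Q0)
      + pderiv (1 : Fin 2) (pderiv (1 : Fin 2) Q0)
      = monomial (Finsupp.single 0 a + Finsupp.single 1 b) c
        + monomial (Finsupp.single 0 (a + 2) + Finsupp.single 1 (b - 2))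
            (c / d * b * (b - 1 : ℕ)) := by
    have e1 : pderiv (0 : Fin 2) (pderiv (0 : Fin 2) Q0)
        = monomial (Finsupp.single 0 a + Finsupp.single 1 b) c := by
      rw [hQ0, pderiv_monomial, sub0, app0, pderiv_monomial, sub0, app0,
        show a + 2 - 1 = a + 1 from rfl, show a + 1 - 1 = a from rfl]
      congr 1
      push_cast; field_simp [hd_def]; ring
    have e2 : pderiv (1 : Fin 2) (pderiv (1 : Fin 2) Q0)
        = monomial (Finsupp.single 0 (a + 2) + Finsupp.single 1 (b - 2))
            (c / d * b * (b - 1 : ℕ)) := by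
      rw [hQ0, pderiv_monomial, sub1, app1, pderiv_monomial, sub1, app1,
        show b - 1 - 1 = b - 2 by omega]
    rw [e1, e2]
  rcases Nat.lt_or_ge b 2 with hb | hb
  · refine ⟨Q0, hdeg0, ?_⟩
    rw [hlap0]
    have : (c / d * b * (b - 1 : ℕ)) = 0 := by
      interval_cases b <;> simp
    rw [this, map_zero, add_zero]
  · obtain ⟨n, rfl⟩ : ∃ n, b = n + 2 := ⟨b - 2, by omega⟩
    obtain ⟨Q1, hdeg1, hlap1⟩ := ih n (by omega) (a + 2)
      (-(c / d * (n + 2 : ℕ) * (n + 2 - 1 : ℕ)))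
    refine ⟨Q0 + Q1, ?_, ?_⟩
    · exact (totalDegree_add _ _).trans (max_le hdeg0 (by omega))
    · simp only [map_add]
      rw [show ∀ x y z w : MvPolynomial (Fin 2) ℝ, x + y + (z + w) = (x + z) + (y + w) by
        intros; ring]
      rw [hlap0, hlap1]
      rw [show n + 2 - 2 = n from rfl, map_neg]
      ring

/-- **Existence of a polynomial anti-Laplacian of degree `N + 2`.**
Every polynomial `P ∈ ℝ[X,Y]` of total degree at most `N` admits an anti-Laplacian
`Q ∈ ℝ[X,Y]` of total degree at most `N + 2`, i.e. `∂²Q/∂X² + ∂²Q/∂Y² = P`, where the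
partial derivatives are formal partial derivatives of polynomials. -/
theorem exists_polynomial_antiLaplacian
    (N : ℕ) (P : MvPolynomial (Fin 2) ℝ) (hP : P.totalDegree ≤ N) :
    ∃ Q : MvPolynomial (Fin 2) ℝ, Q.totalDegree ≤ N + 2 ∧
      pderiv (0 : Fin 2) (pderiv (0 : Fin 2) Q)
        + pderiv (1 : Fin 2) (pderiv (1 : Fin 2) Q) = P := by
  have key : ∀ S : Finset (Fin 2 →₀ ℕ), (∀ m ∈ S, (m.sum fun _ e => e) ≤ N) →
      ∀ f : (Fin 2 →₀ ℕ) → ℝ, ∃ Q : MvPolynomial (Fin 2) ℝ, Q.totalDegree ≤ N + 2 ∧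
      pderiv (0 : Fin 2) (pderiv (0 : Fin 2) Q)
        + pderiv (1 : Fin 2) (pderiv (1 : Fin 2) Q) = ∑ m ∈ S, monomial m (f m) := by
    intro S
    induction S using Finset.induction_on with
    | empty => exact fun _ f => ⟨0, by simp⟩
    | @insert m S hm ihS =>
      intro hbound f
      obtain ⟨Q', hdeg', hlap'⟩ := ihS (fun x hx => hbound x (Finset.mem_insert_of_mem hx)) f
      obtain ⟨Qm, hdegm, hlapm⟩ := mono_antiLap (m 1) (m 0) (f m)
      have hmsum : m 0 + m 1 ≤ N := by
        have := hbound m (Finset.mem_insert_self _ _)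
        rwa [fin2_decomp m, msum] at this
      refine ⟨Qm + Q', ?_, ?_⟩
      · exact (totalDegree_add _ _).trans (max_le (hdegm.trans (by omega)) hdeg')
      · simp only [map_add]
        rw [Finset.sum_insert hm,
          show ∀ x y z w : MvPolynomial (Fin 2) ℝ, x + y + (z + w) = (x + z) + (y + w) by
            intros; ring, hlap', hlapm, ← fin2_decomp]
  obtain ⟨Q, h1, h2⟩ := key P.support (fun m hm => (le_totalDegree hm).trans hP)
    (fun m => coeff m P)
  exact ⟨Q, h1, by rw [h2, ← as_sum]⟩
end
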